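/- Let a, b > 0 and f(t) = max_{λ<0} min{ −a/λ + e^{tλ}, −λ/b + 1 − e^{tλ} } for t ≥ 0. Then f attains its minimum over t ∈ [0,∞) uniquely at t* = (ln 2)/√(ab), and at the optimum the maximizing λ equals −√(ab). -/

import Mathlib

open Real

set_option maxHeartbeats 2000000 in
/-- Let `a, b > 0` and
`f(t) = sup_{λ<0} min{ −a/λ + e^{tλ}, −λ/b + 1 − e^{tλ} }`. Then `f` attains its minimum
over `t ∈ [0,∞)` uniquely at `t* = (ln 2)/√(ab)`, and at the optimum the maximizing `λ`
equals `−√(ab)`, i.e. `f(t*)` equals the value of the inner `min` at `λ = −√(ab)`. -/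
theorem rcmc_stmt19 (a b : ℝ) (ha : 0 < a) (hb : 0 < b) :
    let f : ℝ → ℝ := fun t =>
      sSup {v : ℝ | ∃ lam : ℝ, lam < 0 ∧
        v = min (-a / lam + Real.exp (t * lam)) (-lam / b + 1 - Real.exp (t * lam))}
    let tstar := Real.log 2 / Real.sqrt (a * b)
    let lamstar := -Real.sqrt (a * b)
    (∀ t : ℝ, 0 ≤ t → f tstar ≤ f t) ∧
    (∀ t : ℝ, 0 ≤ t → f t = f tstar → t = tstar) ∧
    f tstar = min (-a / lamstar + Real.exp (tstar * lamstar))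
      (-lamstar / b + 1 - Real.exp (tstar * lamstar)) := by
  intro f tstar lamstar
  have hab : 0 < a * b := mul_pos ha hb
  set s : ℝ := Real.sqrt (a * b) with hs_def
  have hs : 0 < s := Real.sqrt_pos.mpr hab
  have hs2 : s * s = a * b := Real.mul_self_sqrt hab.le
  set c : ℝ := s / b with hc_def
  have hc : 0 < c := div_pos hs hb
  have hca : c * s = a := by
    rw [hc_def]; field_simp; nlinarith [hs2]
  have hasc : a / s = c := by
    rw [← hca, mul_div_assoc, div_self hs.ne', mul_one]
  have htstar : tstar = Real.log 2 / s := by rw [hs_def]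
  have hlamstar : lamstar = -s := by rw [hs_def]
  have hf : ∀ t : ℝ, f t = sSup {v : ℝ | ∃ lam : ℝ, lam < 0 ∧
      v = min (-a / lam + Real.exp (t * lam)) (-lam / b + 1 - Real.exp (t * lam))} :=
    fun _ => rfl
  have hlog2 : 0 < Real.log 2 := Real.log_pos (by norm_num)
  have htstar_pos : 0 < tstar := by rw [htstar]; positivity
  have hel : Real.exp (-Real.log 2) = 1 / 2 := by
    rw [Real.exp_neg, Real.exp_log two_pos]; norm_num
  have hts : tstar * s = Real.log 2 := by
    rw [htstar, div_mul_cancel₀ _ hs.ne']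
  -- upper bound of the set, uniform in t ≥ 0
  have hbdd : ∀ t : ℝ, 0 ≤ t → ∀ m ∈ {v : ℝ | ∃ lam : ℝ, lam < 0 ∧
      v = min (-a / lam + Real.exp (t * lam)) (-lam / b + 1 - Real.exp (t * lam))},
      m ≤ c + 1 := by
    intro t ht m hm
    obtain ⟨lam, hlam, rfl⟩ := hm
    rcases le_or_gt lam (-s) with h | h
    · refine le_trans (min_le_left _ _) ?_
      have h1 : -a / lam = a / (-lam) := by rw [div_neg, neg_div]
      have h2 : a / (-lam) ≤ a / s := by
        apply div_le_div_of_nonneg_left ha.le hs (by linarith)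
      have h3 : Real.exp (t * lam) ≤ 1 := by
        rw [show (1:ℝ) = Real.exp 0 from (Real.exp_zero).symm]
        exact Real.exp_le_exp.mpr (mul_nonpos_of_nonneg_of_nonpos ht hlam.le)
      rw [h1]
      rw [hasc] at h2
      linarith
    · refine le_trans (min_le_right _ _) ?_
      have h2 : -lam / b ≤ s / b := by gcongr <;> linarith
      rw [← hc_def] at h2
      have h3 : 0 < Real.exp (t * lam) := Real.exp_pos _
      linarith
  -- evaluation at lam = -(s*r)
  have hmin_eq : ∀ t r : ℝ, 0 < r →
      min (-a / -(s * r) + Real.exp (t * -(s * r)))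
        (- -(s * r) / b + 1 - Real.exp (t * -(s * r)))
      = min (c / r + Real.exp (-(t * s * r))) (c * r + 1 - Real.exp (-(t * s * r))) := by
    intro t r hr
    rw [show t * -(s * r) = -(t * s * r) from by ring]
    have e1 : -a / -(s * r) = c / r := by
      rw [neg_div_neg_eq, ← hca, mul_comm c s, mul_div_mul_left _ _ hs.ne']
    have e2 : - -(s * r) / b = c * r := by
      rw [neg_neg, hc_def]; ring
    rw [e1, e2]
  -- lower bound on the sup via a single evaluation point
  have hmemle : ∀ t : ℝ, 0 ≤ t → ∀ r : ℝ, 0 < r →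
      min (c / r + Real.exp (-(t * s * r))) (c * r + 1 - Real.exp (-(t * s * r))) ≤ f t := by
    intro t ht r hr
    rw [hf]
    apply le_csSup ⟨c + 1, fun m hm => hbdd t ht m hm⟩
    exact ⟨-(s * r), by nlinarith, (hmin_eq t r hr).symm⟩
  -- value of f at tstar
  have hft : f tstar = c + 1 / 2 := by
    apply le_antisymm
    · rw [hf]
      apply csSup_le
      · exact ⟨min (-a / (-1) + Real.exp (tstar * (-1)))
          ((1:ℝ) / b + 1 - Real.exp (tstar * (-1))), -1, by norm_num, by norm_num⟩
      · intro m hm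
        obtain ⟨lam, hlam, rfl⟩ := hm
        rcases le_or_gt lam (-s) with h | h
        · refine le_trans (min_le_left _ _) ?_
          have h1 : -a / lam = a / (-lam) := by rw [div_neg, neg_div]
          have h2 : a / (-lam) ≤ a / s :=
            div_le_div_of_nonneg_left ha.le hs (by linarith)
          have h3 : Real.exp (tstar * lam) ≤ 1 / 2 := by
            rw [← hel]
            apply Real.exp_le_exp.mpr
            have := mul_le_mul_of_nonneg_left h htstar_pos.le
            calc tstar * lam ≤ tstar * (-s) := this
              _ = -(tstar * s) := by ring
              _ = -Real.log 2 := by rw [hts]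
          rw [h1]; rw [hasc] at h2; linarith
        · refine le_trans (min_le_right _ _) ?_
          have h2 : -lam / b ≤ s / b := by gcongr; linarith
          rw [← hc_def] at h2
          have h3 : 1 / 2 ≤ Real.exp (tstar * lam) := by
            rw [← hel]
            apply Real.exp_le_exp.mpr
            have := mul_le_mul_of_nonneg_left h.le htstar_pos.le
            calc -Real.log 2 = -(tstar * s) := by rw [hts]
              _ = tstar * (-s) := by ring
              _ ≤ tstar * lam := this
          linarith
    · have h := hmemle tstar htstar_pos.le 1 one_pos
      have he : Real.exp (-(tstar * s * 1)) = 1 / 2 := by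
        rw [show -(tstar * s * 1) = -Real.log 2 from by rw [hts]; ring, hel]
      rw [he] at h
      have e1 : c / 1 + 1 / 2 = c + 1 / 2 := by ring
      have e2 : c * 1 + 1 - 1 / 2 = c + 1 / 2 := by ring
      rw [e1, e2, min_self] at h
      exact h
  -- the AM-GM style identity
  have hamgm : ∀ r : ℝ, 0 < r → c / r + c * r - 2 * c = c * (r - 1) ^ 2 / r := by
    intro r hr; field_simp; ring
  refine ⟨?_, ?_, ?_⟩
  · -- minimality
    intro t ht
    rw [hft]
    rcases le_or_gt (t * s) (Real.log 2) with hu | hu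
    · -- small t: use IVT for  E r = c*(r-1) + 1/2
      set F : ℝ → ℝ := fun r => Real.exp (-(t * s * r)) - (c * (r - 1) + 1 / 2) with hF_def
      have hR : (1:ℝ) ≤ 1 + 1 / c := le_add_of_nonneg_right (by positivity)
      have hcont : ContinuousOn F (Set.Icc 1 (1 + 1 / c)) := by
        apply Continuous.continuousOn; fun_prop
      have hF1 : 0 ≤ F 1 := by
        have h1 : Real.exp (-Real.log 2) ≤ Real.exp (-(t * s * 1)) :=
          Real.exp_le_exp.mpr (by linarith)
        rw [hel] at h1
        simp only [hF_def]; linarith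
      have hFR : F (1 + 1 / c) ≤ 0 := by
        have h1 : Real.exp (-(t * s * (1 + 1 / c))) ≤ 1 := by
          have h0 : 0 ≤ t * s * (1 + 1 / c) := by positivity
          calc Real.exp (-(t * s * (1 + 1 / c))) ≤ Real.exp 0 :=
                Real.exp_le_exp.mpr (by linarith)
            _ = 1 := Real.exp_zero
        have h2 : c * (1 + 1 / c - 1) = 1 := by field_simp; ring
        simp only [hF_def]; linarith
      obtain ⟨r1, hr1mem, hFr1⟩ := intermediate_value_Icc' hR hcont
        (Set.mem_Icc.mpr ⟨hFR, hF1⟩)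
      have hr1_ge : (1:ℝ) ≤ r1 := hr1mem.1
      have hr1 : 0 < r1 := by linarith
      have hE : Real.exp (-(t * s * r1)) = c * (r1 - 1) + 1 / 2 := by
        have := hFr1; simp only [hF_def] at this; linarith
      have h := hmemle t ht r1 hr1
      rw [hE] at h
      refine le_trans (le_min ?_ ?_) h
      · have h1 := hamgm r1 hr1
        have h0 : 0 ≤ c * (r1 - 1) ^ 2 / r1 := by positivity
        linarith
      · linarith
    · -- large t: use IVT for  E r = c + 1/2 - c/r
      set r0 : ℝ := c / (c + 1) with hr0_def
      have hr0 : 0 < r0 := by positivity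
      have hr01 : r0 ≤ 1 := by
        rw [hr0_def, div_le_one (by positivity)]; linarith
      set F : ℝ → ℝ := fun r => Real.exp (-(t * s * r)) - (c + 1 / 2 - c / r) with hF_def
      have hcont : ContinuousOn F (Set.Icc r0 1) := by
        apply ContinuousOn.sub
        · apply Continuous.continuousOn; fun_prop
        · apply ContinuousOn.sub continuousOn_const
          exact continuousOn_const.div continuousOn_id
            (fun x hx => ne_of_gt (lt_of_lt_of_le hr0 hx.1))
      have hF1 : F 1 ≤ 0 := by
        have h1 : Real.exp (-(t * s * 1)) ≤ Real.exp (-Real.log 2) :=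
          Real.exp_le_exp.mpr (by linarith)
        rw [hel] at h1
        simp only [hF_def]
        have h2 : c / 1 = c := by ring
        linarith
      have hFr0 : 0 ≤ F r0 := by
        have h2 : c / r0 = c + 1 := by
          rw [hr0_def]; field_simp
        have h3 : 0 < Real.exp (-(t * s * r0)) := Real.exp_pos _
        simp only [hF_def]; linarith
      obtain ⟨r1, hr1mem, hFr1⟩ := intermediate_value_Icc' hr01 hcont
        (Set.mem_Icc.mpr ⟨hF1, hFr0⟩)
      have hr1 : 0 < r1 := lt_of_lt_of_le hr0 hr1mem.1
      have hE : Real.exp (-(t * s * r1)) = c + 1 / 2 - c / r1 := by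
        have := hFr1; simp only [hF_def] at this; linarith
      have h := hmemle t ht r1 hr1
      rw [hE] at h
      refine le_trans (le_min ?_ ?_) h
      · linarith
      · have h1 := hamgm r1 hr1
        have h0 : 0 ≤ c * (r1 - 1) ^ 2 / r1 := by positivity
        linarith
  · -- uniqueness
    intro t ht hfe
    by_contra hne
    have hune : t * s ≠ Real.log 2 := by
      intro hts'
      exact hne (by rw [htstar, ← hts', mul_div_cancel_right₀ _ hs.ne'])
    have hkey : c + 1 / 2 < f t := by
      have hts0 : 0 ≤ t * s := mul_nonneg ht hs.le
      rcases lt_or_gt_of_ne hune with hu | hu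
      · -- t < tstar
        set F : ℝ → ℝ := fun r => Real.exp (-(t * s * r)) - (c * (r - 1) + 1 / 2) with hF_def
        have hR : (1:ℝ) ≤ 1 + 1 / c := le_add_of_nonneg_right (by positivity)
        have hcont : ContinuousOn F (Set.Icc 1 (1 + 1 / c)) := by
          apply Continuous.continuousOn; fun_prop
        have hF1 : 0 < F 1 := by
          have h1 : Real.exp (-Real.log 2) < Real.exp (-(t * s * 1)) :=
            Real.exp_lt_exp.mpr (by linarith)
          rw [hel] at h1
          simp only [hF_def]; linarith
        have hFR : F (1 + 1 / c) ≤ 0 := by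
          have h1 : Real.exp (-(t * s * (1 + 1 / c))) ≤ 1 := by
            have h0 : 0 ≤ t * s * (1 + 1 / c) := by positivity
            calc Real.exp (-(t * s * (1 + 1 / c))) ≤ Real.exp 0 :=
                  Real.exp_le_exp.mpr (by linarith)
              _ = 1 := Real.exp_zero
          have h2 : c * (1 + 1 / c - 1) = 1 := by field_simp; ring
          simp only [hF_def]; linarith
        obtain ⟨r1, hr1mem, hFr1⟩ := intermediate_value_Icc' hR hcont
          (Set.mem_Icc.mpr ⟨hFR, hF1.le⟩)
        have hr1_ge : (1:ℝ) ≤ r1 := hr1mem.1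
        have hr1 : 0 < r1 := by linarith
        have hr1_gt : 1 < r1 := by
          rcases lt_or_eq_of_le hr1_ge with h | h
          · exact h
          · exfalso; rw [← h] at hFr1; linarith
        have hE : Real.exp (-(t * s * r1)) = c * (r1 - 1) + 1 / 2 := by
          have h := hFr1; simp only [hF_def] at h; linarith
        have hgc : ContinuousAt (fun r : ℝ => c / r + Real.exp (-(t * s * r))) r1 := by
          apply ContinuousAt.add
          · exact continuousAt_const.div continuousAt_id hr1.ne'
          · exact (Real.continuous_exp.comp (by fun_prop : Continuous
              (fun r : ℝ => -(t * s * r)))).continuousAt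
        have hgval : c + 1 / 2 < c / r1 + Real.exp (-(t * s * r1)) := by
          rw [hE]
          have h1 := hamgm r1 hr1
          have hsq : 0 < (r1 - 1) ^ 2 := pow_pos (by linarith) 2
          have h0 : 0 < c * (r1 - 1) ^ 2 / r1 := div_pos (mul_pos hc hsq) hr1
          linarith
        have hev : ∀ᶠ r in nhdsWithin r1 (Set.Ioi r1),
            c + 1 / 2 < c / r + Real.exp (-(t * s * r)) :=
          (Filter.Tendsto.eventually hgc (eventually_gt_nhds hgval)).filter_mono
            nhdsWithin_le_nhds
        obtain ⟨r2, hgr2, hr2⟩ := (hev.and self_mem_nhdsWithin).exists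
        have hr2gt : r1 < r2 := hr2
        have hr2pos : 0 < r2 := lt_trans hr1 hr2gt
        have hE2 : Real.exp (-(t * s * r2)) ≤ Real.exp (-(t * s * r1)) := by
          apply Real.exp_le_exp.mpr
          have := mul_le_mul_of_nonneg_left hr2gt.le hts0
          linarith
        rw [hE] at hE2
        have hbeta : c + 1 / 2 < c * r2 + 1 - Real.exp (-(t * s * r2)) := by
          have h3 : c * r1 < c * r2 := by
            exact mul_lt_mul_of_pos_left hr2gt hc
          linarith
        have h := hmemle t ht r2 hr2pos
        have hmin := lt_min hgr2 hbeta
        linarith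
      · -- t > tstar
        set r0 : ℝ := c / (c + 1) with hr0_def
        have hr0 : 0 < r0 := by positivity
        have hr01 : r0 ≤ 1 := by
          rw [hr0_def, div_le_one (by positivity)]; linarith
        set F : ℝ → ℝ := fun r => Real.exp (-(t * s * r)) - (c + 1 / 2 - c / r) with hF_def
        have hcont : ContinuousOn F (Set.Icc r0 1) := by
          apply ContinuousOn.sub
          · apply Continuous.continuousOn; fun_prop
          · apply ContinuousOn.sub continuousOn_const
            exact continuousOn_const.div continuousOn_id
              (fun x hx => ne_of_gt (lt_of_lt_of_le hr0 hx.1))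
        have hF1 : F 1 < 0 := by
          have h1 : Real.exp (-(t * s * 1)) < Real.exp (-Real.log 2) :=
            Real.exp_lt_exp.mpr (by linarith)
          rw [hel] at h1
          simp only [hF_def]
          have h2 : c / 1 = c := by ring
          linarith
        have hFr0 : 0 ≤ F r0 := by
          have h2 : c / r0 = c + 1 := by
            rw [hr0_def]; field_simp
          have h3 : 0 < Real.exp (-(t * s * r0)) := Real.exp_pos _
          simp only [hF_def]; linarith
        obtain ⟨r1, hr1mem, hFr1⟩ := intermediate_value_Icc' hr01 hcont
          (Set.mem_Icc.mpr ⟨hF1.le, hFr0⟩)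
        have hr1 : 0 < r1 := lt_of_lt_of_le hr0 hr1mem.1
        have hr1_lt : r1 < 1 := by
          rcases lt_or_eq_of_le hr1mem.2 with h | h
          · exact h
          · exfalso; rw [h] at hFr1; linarith
        have hE : Real.exp (-(t * s * r1)) = c + 1 / 2 - c / r1 := by
          have h := hFr1; simp only [hF_def] at h; linarith
        have hBc : ContinuousAt (fun r : ℝ => c * r + 1 - Real.exp (-(t * s * r))) r1 := by
          fun_prop
        have hBval : c + 1 / 2 < c * r1 + 1 - Real.exp (-(t * s * r1)) := by
          rw [hE]
          have h1 := hamgm r1 hr1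
          have hsq : 0 < (r1 - 1) ^ 2 := by
            rw [show (r1 - 1) ^ 2 = (1 - r1) ^ 2 from by ring]
            exact pow_pos (by linarith) 2
          have h0 : 0 < c * (r1 - 1) ^ 2 / r1 := div_pos (mul_pos hc hsq) hr1
          linarith
        have hev1 : ∀ᶠ r in nhdsWithin r1 (Set.Iio r1),
            c + 1 / 2 < c * r + 1 - Real.exp (-(t * s * r)) :=
          (Filter.Tendsto.eventually hBc (eventually_gt_nhds hBval)).filter_mono
            nhdsWithin_le_nhds
        have hev2 : ∀ᶠ r in nhdsWithin r1 (Set.Iio r1), 0 < r :=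
          ((isOpen_Ioi.eventually_mem (Set.mem_Ioi.mpr hr1)).filter_mono
            nhdsWithin_le_nhds)
        obtain ⟨r2, ⟨hBr2, hr2pos⟩, hr2lt⟩ := ((hev1.and hev2).and self_mem_nhdsWithin).exists
        have hr2lt' : r2 < r1 := hr2lt
        have halpha : c + 1 / 2 < c / r2 + Real.exp (-(t * s * r2)) := by
          have h1 : c / r1 < c / r2 := div_lt_div_of_pos_left hc hr2pos hr2lt'
          have h2 : Real.exp (-(t * s * r1)) ≤ Real.exp (-(t * s * r2)) := by
            apply Real.exp_le_exp.mpr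
            have := mul_le_mul_of_nonneg_left hr2lt'.le hts0
            linarith
          rw [hE] at h2
          linarith
        have h := hmemle t ht r2 hr2pos
        have hmin := lt_min halpha hBr2
        linarith
    rw [hfe, hft] at hkey
    exact lt_irrefl _ hkey
  · -- value at the optimum
    rw [hft, hlamstar]
    have he : Real.exp (tstar * -s) = 1 / 2 := by
      rw [show tstar * -s = -(tstar * s) from by ring, hts, hel]
    rw [he]
    have e1 : -a / -s = c := by
      rw [neg_div_neg_eq, hasc]
    have e2 : - -s / b = c := by rw [neg_neg, ← hc_def]
    rw [e1, e2, show c + 1 - 1 / 2 = c + 1 / 2 from by ring, min_self]
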